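/- Suppose λ, λ_n, λ'_n are nonnegative real numbers, not all three zero, and λ₀, λ₁, …, λ_{n−1} are nonzero complex numbers. Then f has no degenerate critical point (y, x₁, …, x_n) with λ₀y, λ₁x₁, …, λ_{n−1}x_{n−1} and x_n all positive real: at every point where all n+1 partial derivatives of f vanish and λ₀y ∈ ℝ_{>0}, λ_i x_i ∈ ℝ_{>0} for i = 1,…,n−1, and x_n ∈ ℝ_{>0}, the Hessian matrix of second partial derivatives of f is invertible. -/

import Mathlib

open MvPolynomial

/-- The deformed Brieskorn–Pham polynomial
`f = y³ − 3λ₀y + Σ_{i=1}^{n−1} (x_i^{3d} − 3d·λ_i·x_i) + x_n^{3d} − 3d·λ_n·x_n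
− (3d/(3d−1))·λ'_n·x_n^{3d−1} − 3λ·(λ₀·y·x_n^{2d} + d·Σ_{i=1}^{n−1} λ_i·x_i·x_n^{3d−1})`,
with `n = m+1`, in the variables `y` (variable `0`), `x_i` (variable `i` for
`1 ≤ i ≤ m`) and `x_n` (the last variable). -/
noncomputable def asympPoly (m d : ℕ) (l l0 : ℂ) (li : Fin m → ℂ) (ln ln' : ℂ) :
    MvPolynomial (Fin (m + 2)) ℂ :=
  X 0 ^ 3 - C (3 * l0) * X 0
    + ∑ i : Fin m,
        (X i.succ.castSucc ^ (3 * d) - C (3 * (d : ℂ) * li i) * X i.succ.castSucc)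
    + X (Fin.last (m + 1)) ^ (3 * d) - C (3 * (d : ℂ) * ln) * X (Fin.last (m + 1))
    - C ((3 * (d : ℂ)) / (3 * (d : ℂ) - 1) * ln') * X (Fin.last (m + 1)) ^ (3 * d - 1)
    - C (3 * l) * (C l0 * X 0 * X (Fin.last (m + 1)) ^ (2 * d)
        + C (d : ℂ) * ∑ i : Fin m,
            C (li i) * X i.succ.castSucc * X (Fin.last (m + 1)) ^ (3 * d - 1))

variable {m d : ℕ} {l l0 : ℂ} {li : Fin m → ℂ} {ln ln' : ℂ} {w : Fin (m+2) → ℂ}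

-- pderiv zero lemmas
lemma pdA1 (i : Fin m) : pderiv (0 : Fin (m+2)) (X i.succ.castSucc : MvPolynomial (Fin (m+2)) ℂ) = 0 :=
  pderiv_X_of_ne (by simp [Fin.ext_iff])
lemma pdA2 : pderiv (0 : Fin (m+2)) (X (Fin.last (m+1)) : MvPolynomial (Fin (m+2)) ℂ) = 0 :=
  pderiv_X_of_ne (by simp [Fin.ext_iff])
lemma pdB1 (i : Fin m) : pderiv i.succ.castSucc (X (0:Fin (m+2)) : MvPolynomial (Fin (m+2)) ℂ) = 0 :=
  pderiv_X_of_ne (by simp [Fin.ext_iff])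
lemma pdB2 (i : Fin m) : pderiv i.succ.castSucc (X (Fin.last (m+1)) : MvPolynomial (Fin (m+2)) ℂ) = 0 :=
  pderiv_X_of_ne (by simp [Fin.ext_iff]; omega)
lemma pdB3 (i j : Fin m) : pderiv i.succ.castSucc (X j.succ.castSucc : MvPolynomial (Fin (m+2)) ℂ) =
    if i = j then 1 else 0 := by
  rcases eq_or_ne i j with rfl | h
  · simp
  · rw [if_neg h]; exact pderiv_X_of_ne (by simp [Fin.ext_iff]; omega)
lemma pdC1 : pderiv (Fin.last (m+1)) (X (0:Fin (m+2)) : MvPolynomial (Fin (m+2)) ℂ) = 0 :=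
  pderiv_X_of_ne (by simp [Fin.ext_iff])
lemma pdC2 (i : Fin m) : pderiv (Fin.last (m+1)) (X i.succ.castSucc : MvPolynomial (Fin (m+2)) ℂ) = 0 :=
  pderiv_X_of_ne (by simp [Fin.ext_iff]; omega)


lemma pderiv_ite (j : Fin (m+2)) (c : Prop) [Decidable c] (p q : MvPolynomial (Fin (m+2)) ℂ) :
    pderiv j (if c then p else q) = if c then pderiv j p else pderiv j q := apply_ite _ _ _ _
lemma eval_ite (c : Prop) [Decidable c] (p q : MvPolynomial (Fin (m+2)) ℂ) :
    eval w (if c then p else q) = if c then eval w p else eval w q := apply_ite _ _ _ _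

lemma cast1 (hd : 1 ≤ d) : ((3*d-1 : ℕ) : ℂ) = 3*(d:ℂ)-1 := by
  push_cast [Nat.cast_sub (by omega : 1 ≤ 3*d)]; ring
lemma cast2 (hd : 1 ≤ d) : ((3*d-2 : ℕ) : ℂ) = 3*(d:ℂ)-2 := by
  push_cast [Nat.cast_sub (by omega : 2 ≤ 3*d)]; ring
lemma cast3 (hd : 1 ≤ d) : ((2*d-1 : ℕ) : ℂ) = 2*(d:ℂ)-1 := by
  push_cast [Nat.cast_sub (by omega : 1 ≤ 2*d)]; ring

lemma evalD0 (hd : 1 ≤ d) :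
    eval w (pderiv 0 (asympPoly m d l l0 li ln ln')) =
      3 * w 0 ^ 2 - 3 * l0 - 3 * l * l0 * w (Fin.last (m+1)) ^ (2*d) := by
  simp only [asympPoly, map_sub, map_add, map_sum, pderiv_C_mul, pderiv_mul, pderiv_pow,
    pderiv_C, pderiv_X_self, pdA1, pdA2, Derivation.map_natCast,
    eval_add, eval_sub, eval_mul, eval_pow, eval_C, eval_X, map_natCast,
    mul_zero, zero_mul, add_zero, zero_add, mul_one, sub_zero, eval_zero, Finset.sum_const_zero]
  push_cast
  ring

lemma evalDN (hd : 1 ≤ d) (h3d : (3:ℂ) * d - 1 ≠ 0) :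
    eval w (pderiv (Fin.last (m+1)) (asympPoly m d l l0 li ln ln')) =
      3 * d * w (Fin.last (m+1)) ^ (3*d-1) - 3 * d * ln
        - 3 * d * ln' * w (Fin.last (m+1)) ^ (3*d-2)
        - 3 * l * (2 * d * l0 * w 0 * w (Fin.last (m+1)) ^ (2*d-1)
            + d * (3*(d:ℂ)-1) * (∑ i : Fin m, li i * w i.succ.castSucc) * w (Fin.last (m+1)) ^ (3*d-2)) := by
  simp only [asympPoly, map_sub, map_add, map_sum, pderiv_C_mul, pderiv_mul, pderiv_pow,
    pderiv_C, pderiv_X_self, pdC1, pdC2, Derivation.map_natCast,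
    eval_add, eval_sub, eval_mul, eval_pow, eval_C, eval_X, map_natCast, map_neg,
    mul_zero, zero_mul, add_zero, zero_add, mul_one, sub_zero, eval_zero, Finset.sum_const_zero]
  rw [← Finset.sum_mul, cast1 hd, show 3*d-1-1 = 3*d-2 from by omega]
  push_cast
  field_simp

lemma evalDi (hd : 1 ≤ d) (i : Fin m) :
    eval w (pderiv i.succ.castSucc (asympPoly m d l l0 li ln ln')) =
      3 * d * w i.succ.castSucc ^ (3*d-1) - 3 * d * li i
        - 3 * l * d * li i * w (Fin.last (m+1)) ^ (3*d-1) := by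
  simp only [asympPoly, map_sub, map_add, map_sum, pderiv_C_mul, pderiv_mul, pderiv_pow,
    pderiv_C, pderiv_X_self, pdB1, pdB2, pdB3, Derivation.map_natCast,
    eval_add, eval_sub, eval_mul, eval_pow, eval_C, eval_X, map_natCast, map_neg, pderiv_ite, eval_ite,
    mul_zero, zero_mul, add_zero, zero_add, mul_one, sub_zero, eval_zero, Finset.sum_const_zero,
    map_one, map_zero, mul_ite, ite_mul, one_mul, Finset.sum_sub_distrib,
    Finset.sum_ite_eq, Finset.mem_univ, if_pos, if_true]
  push_cast
  ring

lemma evalD00 :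
    eval w (pderiv 0 (pderiv 0 (asympPoly m d l l0 li ln ln'))) = 6 * w 0 := by
  simp only [asympPoly, map_sub, map_add, map_sum, pderiv_C_mul, pderiv_mul, pderiv_pow,
    pderiv_C, pderiv_X_self, pdA1, pdA2, Derivation.map_natCast,
    eval_add, eval_sub, eval_mul, eval_pow, eval_C, eval_X, map_natCast, map_neg,
    mul_zero, zero_mul, add_zero, zero_add, mul_one, sub_zero, eval_zero, Finset.sum_const_zero,
    map_one, map_one]
  try push_cast
  try ring

lemma evalD0i (i : Fin m) :
    eval w (pderiv 0 (pderiv i.succ.castSucc (asympPoly m d l l0 li ln ln'))) = 0 := by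
  simp only [asympPoly, map_sub, map_add, map_sum, pderiv_C_mul, pderiv_mul, pderiv_pow,
    pderiv_C, pderiv_X_self, pdA1, pdA2, pdB1, pdB2, pdB3, Derivation.map_natCast,
    eval_add, eval_sub, eval_mul, eval_pow, eval_C, eval_X, map_natCast, map_neg, pderiv_ite, eval_ite,
    mul_zero, zero_mul, add_zero, zero_add, mul_one, sub_zero, eval_zero, Finset.sum_const_zero,
    map_one, map_one, map_zero, ite_self, mul_ite, ite_mul, one_mul]
  try push_cast
  try ring

lemma evalDi0 (i : Fin m) :
    eval w (pderiv i.succ.castSucc (pderiv 0 (asympPoly m d l l0 li ln ln'))) = 0 := by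
  simp only [asympPoly, map_sub, map_add, map_sum, pderiv_C_mul, pderiv_mul, pderiv_pow,
    pderiv_C, pderiv_X_self, pdA1, pdA2, pdB1, pdB2, pdB3, Derivation.map_natCast,
    eval_add, eval_sub, eval_mul, eval_pow, eval_C, eval_X, map_natCast, map_neg, pderiv_ite, eval_ite,
    mul_zero, zero_mul, add_zero, zero_add, mul_one, sub_zero, eval_zero, Finset.sum_const_zero,
    map_one, map_one, map_zero, ite_self, mul_ite, ite_mul, one_mul]
  try push_cast
  try ring

lemma evalD0N (hd : 1 ≤ d) :
    eval w (pderiv 0 (pderiv (Fin.last (m+1)) (asympPoly m d l l0 li ln ln'))) =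
      -6 * l * d * l0 * w (Fin.last (m+1)) ^ (2*d-1) := by
  simp only [asympPoly, map_sub, map_add, map_sum, pderiv_C_mul, pderiv_mul, pderiv_pow,
    pderiv_C, pderiv_X_self, pdA1, pdA2, pdC1, pdC2, Derivation.map_natCast,
    eval_add, eval_sub, eval_mul, eval_pow, eval_C, eval_X, map_natCast, map_neg,
    mul_zero, zero_mul, add_zero, zero_add, mul_one, sub_zero, eval_zero, Finset.sum_const_zero,
    map_one, map_one, map_zero, zero_sub, neg_zero]
  try push_cast
  try ring

lemma evalDN0 (hd : 1 ≤ d) :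
    eval w (pderiv (Fin.last (m+1)) (pderiv 0 (asympPoly m d l l0 li ln ln'))) =
      -6 * l * d * l0 * w (Fin.last (m+1)) ^ (2*d-1) := by
  simp only [asympPoly, map_sub, map_add, map_sum, pderiv_C_mul, pderiv_mul, pderiv_pow,
    pderiv_C, pderiv_X_self, pdA1, pdA2, pdC1, pdC2, Derivation.map_natCast,
    eval_add, eval_sub, eval_mul, eval_pow, eval_C, eval_X, map_natCast, map_neg,
    mul_zero, zero_mul, add_zero, zero_add, mul_one, sub_zero, eval_zero, Finset.sum_const_zero,
    map_one, map_one, map_zero, zero_sub, neg_zero]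
  try push_cast
  try ring

lemma evalDij (hd : 1 ≤ d) (i j : Fin m) :
    eval w (pderiv i.succ.castSucc (pderiv j.succ.castSucc (asympPoly m d l l0 li ln ln'))) =
      if i = j then 3 * d * (3*(d:ℂ)-1) * w j.succ.castSucc ^ (3*d-2) else 0 := by
  have e1 : 3*d-1-1 = 3*d-2 := by omega
  simp only [asympPoly, map_sub, map_add, map_sum, pderiv_C_mul, pderiv_mul, pderiv_pow,
    pderiv_C, pderiv_X_self, pdB1, pdB2, pdB3, pdC1, pdC2, Derivation.map_natCast, e1,
    pderiv_ite, eval_ite,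
    eval_add, eval_sub, eval_mul, eval_pow, eval_C, eval_X, map_natCast, map_neg,
    mul_zero, zero_mul, add_zero, zero_add, mul_one, sub_zero, eval_zero, Finset.sum_const_zero,
    map_one, map_zero, ite_self, mul_ite, ite_mul, one_mul, Finset.sum_sub_distrib,
    Finset.sum_ite_eq, Finset.mem_univ, if_pos, if_true]
  rcases eq_or_ne i j with rfl | h
  · simp only [if_pos rfl, cast1 hd]
    push_cast
    ring
  · simp only [if_neg h]
    try ring

lemma evalDiN (hd : 1 ≤ d) (i : Fin m) :
    eval w (pderiv i.succ.castSucc (pderiv (Fin.last (m+1)) (asympPoly m d l l0 li ln ln'))) =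
      -3 * l * d * (3*(d:ℂ)-1) * li i * w (Fin.last (m+1)) ^ (3*d-2) := by
  have e1 : 3*d-1-1 = 3*d-2 := by omega
  simp only [asympPoly, map_sub, map_add, map_sum, pderiv_C_mul, pderiv_mul, pderiv_pow,
    pderiv_C, pderiv_X_self, pdB1, pdB2, pdB3, pdC1, pdC2, Derivation.map_natCast, e1,
    pderiv_ite, eval_ite,
    eval_add, eval_sub, eval_mul, eval_pow, eval_C, eval_X, map_natCast, map_neg,
    mul_zero, zero_mul, add_zero, zero_add, mul_one, sub_zero, eval_zero, Finset.sum_const_zero,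
    map_one, map_zero, ite_self, mul_ite, ite_mul, one_mul, Finset.sum_sub_distrib,
    Finset.sum_ite_eq, Finset.mem_univ, if_pos, if_true]
  rw [cast1 hd]
  try push_cast
  try ring

lemma evalDNi (hd : 1 ≤ d) (i : Fin m) :
    eval w (pderiv (Fin.last (m+1)) (pderiv i.succ.castSucc (asympPoly m d l l0 li ln ln'))) =
      -3 * l * d * (3*(d:ℂ)-1) * li i * w (Fin.last (m+1)) ^ (3*d-2) := by
  have e1 : 3*d-1-1 = 3*d-2 := by omega
  simp only [asympPoly, map_sub, map_add, map_sum, pderiv_C_mul, pderiv_mul, pderiv_pow,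
    pderiv_C, pderiv_X_self, pdB1, pdB2, pdB3, pdC1, pdC2, Derivation.map_natCast, e1,
    pderiv_ite, eval_ite,
    eval_add, eval_sub, eval_mul, eval_pow, eval_C, eval_X, map_natCast, map_neg,
    mul_zero, zero_mul, add_zero, zero_add, mul_one, sub_zero, eval_zero, Finset.sum_const_zero,
    map_one, map_zero, ite_self, mul_ite, ite_mul, one_mul, Finset.sum_sub_distrib,
    Finset.sum_ite_eq, Finset.mem_univ, if_pos, if_true]
  rw [cast1 hd]
  try push_cast
  try ring

lemma evalDNN (hd : 1 ≤ d) (h3d : (3:ℂ) * d - 1 ≠ 0) :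
    eval w (pderiv (Fin.last (m+1)) (pderiv (Fin.last (m+1)) (asympPoly m d l l0 li ln ln'))) =
      3 * d * (3*(d:ℂ)-1) * w (Fin.last (m+1)) ^ (3*d-2)
        - 3 * d * (3*(d:ℂ)-2) * ln' * w (Fin.last (m+1)) ^ (3*d-3)
        - 3 * l * (2 * d * (2*(d:ℂ)-1) * l0 * w 0 * w (Fin.last (m+1)) ^ (2*d-2)
            + d * (3*(d:ℂ)-1) * (3*(d:ℂ)-2) * (∑ i : Fin m, li i * w i.succ.castSucc)
              * w (Fin.last (m+1)) ^ (3*d-3)) := by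
  have e1 : 3*d-1-1 = 3*d-2 := by omega
  have e2 : 3*d-2-1 = 3*d-3 := by omega
  have e3 : 2*d-1-1 = 2*d-2 := by omega
  simp only [asympPoly, map_sub, map_add, map_sum, pderiv_C_mul, pderiv_mul, pderiv_pow,
    pderiv_C, pderiv_X_self, pdC1, pdC2, Derivation.map_natCast, e1, e2, e3,
    eval_add, eval_sub, eval_mul, eval_pow, eval_C, eval_X, map_natCast, map_neg,
    mul_zero, zero_mul, add_zero, zero_add, mul_one, sub_zero, eval_zero, Finset.sum_const_zero,
    map_one, map_one, map_zero]
  rw [← Finset.sum_mul, cast1 hd, cast2 hd, cast3 hd]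
  push_cast
  field_simp

/-- `z` is a positive real number. -/
def IsPosReal (z : ℂ) : Prop := ∃ r : ℝ, 0 < r ∧ z = r

/-- `z` is a nonnegative real number. -/
def IsNonnegReal (z : ℂ) : Prop := ∃ r : ℝ, 0 ≤ r ∧ z = r

lemma sum_decomp (g : Fin (m+2) → ℂ) :
    ∑ k, g k = g 0 + (∑ i : Fin m, g i.succ.castSucc) + g (Fin.last (m+1)) := by
  rw [Fin.sum_univ_castSucc, Fin.sum_univ_succ, Fin.castSucc_zero]

set_option maxHeartbeats 2000000 in
/-- if `λ, λ_n, λ'_n` are nonnegative real, not all three zero, and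
`λ₀, λ₁, …, λ_{n−1}` are nonzero, then `f` has no degenerate critical point with
`λ₀y`, `λ_i x_i` and `x_n` positive real: at every such critical point the Hessian
matrix of `f` is invertible. -/
theorem asympPoly_no_degenerate_critical_points (m d : ℕ) (hd : 1 ≤ d)
    (l l0 : ℂ) (li : Fin m → ℂ) (ln ln' : ℂ)
    (hl : IsNonnegReal l) (hln : IsNonnegReal ln) (hln' : IsNonnegReal ln')
    (hne : ¬(l = 0 ∧ ln = 0 ∧ ln' = 0))
    (hl0 : l0 ≠ 0) (hli : ∀ i, li i ≠ 0)
    (w : Fin (m + 2) → ℂ)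
    (hcrit : ∀ j, eval w (pderiv j (asympPoly m d l l0 li ln ln')) = 0)
    (hy : IsPosReal (l0 * w 0))
    (hx : ∀ i : Fin m, IsPosReal (li i * w i.succ.castSucc))
    (hxn : IsPosReal (w (Fin.last (m + 1)))) :
    IsUnit (Matrix.of fun j k : Fin (m + 2) =>
      eval w (pderiv j (pderiv k (asympPoly m d l l0 li ln ln')))) := by
  classical
  obtain ⟨L, hL0, rfl⟩ := hl
  obtain ⟨Ln, hLn0, rfl⟩ := hln
  obtain ⟨Ln', hLn'0, rfl⟩ := hln'
  obtain ⟨s, hs, hts⟩ := hxn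
  obtain ⟨a, ha, hay⟩ := hy
  choose b hb hbx using hx
  have hdC : (d:ℂ) ≠ 0 := Nat.cast_ne_zero.mpr (by omega)
  have h3d : (3:ℂ)*(d:ℂ) - 1 ≠ 0 := by
    rw [← cast1 hd]
    exact_mod_cast (by omega : (3*d-1 : ℕ) ≠ 0)
  have hy0 : w 0 ≠ 0 := by
    intro h
    rw [h, mul_zero] at hay
    exact_mod_cast (ne_of_gt ha) (by exact_mod_cast hay.symm)
  have hx0 : ∀ i : Fin m, w i.succ.castSucc ≠ 0 := by
    intro i h
    have := hbx i
    rw [h, mul_zero] at this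
    exact_mod_cast (ne_of_gt (hb i)) (by exact_mod_cast this.symm)
  -- critical point equations
  have hE0 : w 0 ^ 2 = l0 * (1 + (L:ℂ) * (s:ℂ) ^ (2*d)) := by
    have h := hcrit 0
    rw [evalD0 hd, hts] at h
    linear_combination h / 3
  have hEi : ∀ i : Fin m, w i.succ.castSucc ^ (3*d-1) = li i * (1 + (L:ℂ) * (s:ℂ) ^ (3*d-1)) := by
    intro i
    have h := hcrit i.succ.castSucc
    rw [evalDi hd, hts] at h
    refine mul_left_cancel₀ (show (3:ℂ)*(d:ℂ) ≠ 0 from by simp [hdC]) ?_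
    linear_combination h
  set Sr : ℝ := ∑ i, b i with hSr
  have hSum : (∑ i : Fin m, li i * w i.succ.castSucc) = (Sr:ℂ) := by
    rw [Finset.sum_congr rfl fun i _ => hbx i]
    norm_cast
  have hENc : (s:ℂ)^(3*d-1) = (Ln:ℂ) + (Ln':ℂ)*(s:ℂ)^(3*d-2)
      + (L:ℂ)*(2*(a:ℂ)*(s:ℂ)^(2*d-1) + (3*(d:ℂ)-1)*(Sr:ℂ)*(s:ℂ)^(3*d-2)) := by
    have h := hcrit (Fin.last (m+1))
    rw [evalDN hd h3d, hts, hSum] at h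
    refine mul_left_cancel₀ (show (3:ℂ)*(d:ℂ) ≠ 0 from by simp [hdC]) ?_
    linear_combination h + 6*(L:ℂ)*(d:ℂ)*(s:ℂ)^(2*d-1) * hay
  have hENr : s^(3*d-1) = Ln + Ln'*s^(3*d-2)
      + L*(2*a*s^(2*d-1) + (3*(d:ℝ)-1)*Sr*s^(3*d-2)) := by
    exact_mod_cast hENc
  -- real positivity setup
  have hd1 : (1:ℝ) ≤ (d:ℝ) := by exact_mod_cast hd
  set P : ℝ := 1 + L * s^(2*d) with hPdef
  set Q : ℝ := 1 + L * s^(3*d-1) with hQdef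
  have hPpos : 0 < P := by rw [hPdef]; positivity
  have hQpos : 0 < Q := by rw [hQdef]; positivity
  have hPc : ((P:ℝ):ℂ) = 1 + (L:ℂ) * (s:ℂ)^(2*d) := by rw [hPdef]; push_cast; ring
  have hQc : ((Q:ℝ):ℂ) = 1 + (L:ℂ) * (s:ℂ)^(3*d-1) := by rw [hQdef]; push_cast; ring
  have hPc0 : ((P:ℝ):ℂ) ≠ 0 := by exact_mod_cast ne_of_gt hPpos
  have hQc0 : ((Q:ℝ):ℂ) ≠ 0 := by exact_mod_cast ne_of_gt hQpos
  have haC : (a:ℂ) ≠ 0 := by exact_mod_cast ne_of_gt ha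
  have hy3 : w 0 ^ 3 = (a:ℂ) * (1 + (L:ℂ) * (s:ℂ)^(2*d)) := by
    linear_combination w 0 * hE0 + (1 + (L:ℂ)*(s:ℂ)^(2*d)) * hay
  have hkey1 : l0^2 * (1 + (L:ℂ)*(s:ℂ)^(2*d)) = (a:ℂ) * w 0 := by
    refine mul_left_cancel₀ haC ?_
    linear_combination (-l0^2) * hy3 + w 0 * (l0 * w 0 + (a:ℂ)) * hay
  have hkey2 : ∀ i : Fin m, (li i)^2 * (1 + (L:ℂ)*(s:ℂ)^(3*d-1))
      = ((b i : ℝ):ℂ) * w i.succ.castSucc ^ (3*d-2) := by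
    intro i
    have hp : w i.succ.castSucc ^ (3*d-1) = w i.succ.castSucc ^ (3*d-2) * w i.succ.castSucc := by
      rw [← pow_succ]; congr 1; omega
    linear_combination (-(li i)) * (hEi i) + (li i) * hp + (w i.succ.castSucc)^(3*d-2) * (hbx i)
  -- matrix setup
  rw [Matrix.isUnit_iff_isUnit_det, isUnit_iff_ne_zero]
  intro hdet
  rw [← Matrix.exists_mulVec_eq_zero_iff] at hdet
  obtain ⟨v, hv, hMv⟩ := hdet
  set c0 : ℂ := -6*(L:ℂ)*(d:ℂ)*l0*(s:ℂ)^(2*d-1) with hc0def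
  set cB : Fin m → ℂ := fun i => 3*(d:ℂ)*(3*(d:ℂ)-1)*w i.succ.castSucc^(3*d-2) with hcBdef
  set ci : Fin m → ℂ := fun i => -3*(L:ℂ)*(d:ℂ)*(3*(d:ℂ)-1)*li i*(s:ℂ)^(3*d-2) with hcidef
  set D : ℂ := 3*(d:ℂ)*(3*(d:ℂ)-1)*(s:ℂ)^(3*d-2) - 3*(d:ℂ)*(3*(d:ℂ)-2)*(Ln':ℂ)*(s:ℂ)^(3*d-3)
      - 3*(L:ℂ)*(2*(d:ℂ)*(2*(d:ℂ)-1)*l0*(w 0)*(s:ℂ)^(2*d-2)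
        + (d:ℂ)*(3*(d:ℂ)-1)*(3*(d:ℂ)-2)*(Sr:ℂ)*(s:ℂ)^(3*d-3)) with hDdef
  have hA6 : (6:ℂ) * w 0 ≠ 0 := by simp [hy0]
  have hcB0 : ∀ i : Fin m, cB i ≠ 0 := by
    intro i
    rw [hcBdef]
    simp only
    refine mul_ne_zero (mul_ne_zero (by simp [hdC]) h3d) (pow_ne_zero _ (hx0 i))
  -- row equations
  have hR0 : 6 * w 0 * v 0 + c0 * v (Fin.last (m+1)) = 0 := by
    have h := congrFun hMv 0
    simp only [Matrix.mulVec, dotProduct, Matrix.of_apply, Pi.zero_apply] at h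
    rw [sum_decomp] at h
    rw [evalD00, evalD0N hd, hts] at h
    simp only [evalD0i, zero_mul, Finset.sum_const_zero, add_zero] at h
    rw [hc0def]
    linear_combination h
  have hRi : ∀ i : Fin m, cB i * v i.succ.castSucc + ci i * v (Fin.last (m+1)) = 0 := by
    intro i
    have h := congrFun hMv i.succ.castSucc
    simp only [Matrix.mulVec, dotProduct, Matrix.of_apply, Pi.zero_apply] at h
    rw [sum_decomp] at h
    rw [evalDi0, evalDiN hd, hts] at h
    simp only [evalDij hd, ite_mul, zero_mul, Finset.sum_ite_eq, Finset.mem_univ, if_true] at h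
    rw [hcBdef, hcidef]
    simp only
    linear_combination h
  have hRN : c0 * v 0 + (∑ i : Fin m, ci i * v i.succ.castSucc) + D * v (Fin.last (m+1)) = 0 := by
    have h := congrFun hMv (Fin.last (m+1))
    simp only [Matrix.mulVec, dotProduct, Matrix.of_apply, Pi.zero_apply] at h
    rw [sum_decomp] at h
    rw [evalDN0 hd, evalDNN hd h3d, hts, hSum] at h
    simp only [evalDNi hd, hts] at h
    rw [hc0def, hcidef, hDdef]
    simp only
    linear_combination h
  -- solve the linear system
  have hv0e : v 0 = -(c0 * v (Fin.last (m+1)))/(6 * w 0) := by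
    rw [eq_div_iff hA6]
    linear_combination hR0
  have hvie : ∀ i : Fin m, v i.succ.castSucc = -(ci i * v (Fin.last (m+1)))/(cB i) := by
    intro i
    rw [eq_div_iff (hcB0 i)]
    linear_combination hRi i
  have hsum2 : ∑ i : Fin m, ci i * (-(ci i * v (Fin.last (m+1)))/cB i)
      = -(v (Fin.last (m+1)) * ∑ i : Fin m, (ci i)^2/cB i) := by
    rw [Finset.mul_sum, ← Finset.sum_neg_distrib]
    exact Finset.sum_congr rfl fun i _ => by ring
  have hKey : v (Fin.last (m+1)) * (D - c0^2/(6*w 0) - ∑ i : Fin m, (ci i)^2/cB i) = 0 := by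
    simp only [hvie] at hRN
    rw [hv0e, hsum2] at hRN
    linear_combination hRN
  -- the pivot is nonzero
  have hc0A : c0^2 / (6*w 0) = ((6*L^2*(d:ℝ)^2*a*(s^(2*d-1))^2 : ℝ):ℂ) / ((P:ℝ):ℂ) := by
    rw [div_eq_div_iff hA6 hPc0, hPc, hc0def]
    push_cast
    linear_combination 36*(L:ℂ)^2*(d:ℂ)^2*((s:ℂ)^(2*d-1))^2 * hkey1
  have hciB : ∀ i : Fin m, (ci i)^2 / cB i
      = (((3*L^2*(d:ℝ)*(3*(d:ℝ)-1)*(s^(3*d-2))^2) * b i : ℝ):ℂ) / ((Q:ℝ):ℂ) := by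
    intro i
    rw [div_eq_div_iff (hcB0 i) hQc0, hQc, hcidef, hcBdef]
    simp only
    push_cast
    linear_combination 9*(L:ℂ)^2*(d:ℂ)^2*(3*(d:ℂ)-1)^2*((s:ℂ)^(3*d-2))^2 * hkey2 i
  have hSc : (∑ i : Fin m, (ci i)^2 / cB i)
      = (((3*L^2*(d:ℝ)*(3*(d:ℝ)-1)*(s^(3*d-2))^2) * Sr : ℝ):ℂ) / ((Q:ℝ):ℂ) := by
    rw [Finset.sum_congr rfl fun i _ => hciB i, ← Finset.sum_div]
    congr 1
    norm_cast
    rw [hSr, Finset.mul_sum]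
  set Dr : ℝ := 3*(d:ℝ)*(3*(d:ℝ)-1)*s^(3*d-2) - 3*(d:ℝ)*(3*(d:ℝ)-2)*Ln'*s^(3*d-3)
      - 3*L*(2*(d:ℝ)*(2*(d:ℝ)-1)*a*s^(2*d-2) + (d:ℝ)*(3*(d:ℝ)-1)*(3*(d:ℝ)-2)*Sr*s^(3*d-3))
    with hDrdef
  have hDcast : D = ((Dr:ℝ):ℂ) := by
    rw [hDdef, hDrdef]
    push_cast
    linear_combination (-6*(L:ℂ)*(d:ℂ)*(2*(d:ℂ)-1)*(s:ℂ)^(2*d-2)) * hay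
  set KP : ℝ := Dr*(P*Q) - (6*L^2*(d:ℝ)^2*a*(s^(2*d-1))^2)*Q
      - ((3*L^2*(d:ℝ)*(3*(d:ℝ)-1)*(s^(3*d-2))^2) * Sr)*P with hKPdef
  have hKKP : (D - c0^2/(6*w 0) - ∑ i : Fin m, (ci i)^2/cB i) * ((P:ℝ):ℂ) * ((Q:ℝ):ℂ)
      = ((KP:ℝ):ℂ) := by
    rw [hDcast, hc0A, hSc, hKPdef]
    push_cast
    field_simp
  -- real inequality: KP * s = G > 0
  set G : ℝ := (3*(d:ℝ)*(3*(d:ℝ)-1)*Ln + 3*(d:ℝ)*Ln'*s^(3*d-2))*(P*Q)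
      + 6*L*(d:ℝ)^2*a*s^(2*d-1)*Q + 3*L*(d:ℝ)*(3*(d:ℝ)-1)*Sr*s^(3*d-2)*P with hGdef
  have hKPs : KP * s = G := by
    have q1 : s^(3*d-2) = s^(3*d-3)*s := by rw [← pow_succ]; congr 1; omega
    have q2 : s^(3*d-1) = s^(3*d-3)*s^2 := by rw [← pow_add]; congr 1; omega
    have q3 : s^(2*d-1) = s^(2*d-2)*s := by rw [← pow_succ]; congr 1; omega
    have q4 : s^(2*d) = s^(2*d-2)*s^2 := by rw [← pow_add]; congr 1; omega
    rw [hKPdef, hGdef, hDrdef, hPdef, hQdef]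
    rw [q1, q2, q3] at hENr
    rw [q1, q2, q3, q4]
    linear_combination (3*(d:ℝ)*(3*(d:ℝ)-1)*(1+L*(s^(2*d-2)*s^2))*(1+L*(s^(3*d-3)*s^2))) * hENr
  have hSrnn : 0 ≤ Sr := by
    rw [hSr]
    exact Finset.sum_nonneg fun i _ => le_of_lt (hb i)
  have h3dr : (0:ℝ) < 3*(d:ℝ)-1 := by linarith
  have hps1 : (0:ℝ) < s^(3*d-2) := by positivity
  have hps2 : (0:ℝ) < s^(2*d-1) := by positivity
  have hne' : ¬(L = 0 ∧ Ln = 0 ∧ Ln' = 0) := by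
    simp only [← Complex.ofReal_eq_zero]
    exact hne
  have hGpos : 0 < G := by
    rw [hGdef]
    have hcase : L ≠ 0 ∨ Ln ≠ 0 ∨ Ln' ≠ 0 := by
      by_contra hc
      simp only [not_or, not_not] at hc
      exact hne' ⟨hc.1, hc.2.1, hc.2.2⟩
    have t1 : 0 ≤ 3*(d:ℝ)*(3*(d:ℝ)-1)*Ln := by positivity
    have t2 : 0 ≤ 3*(d:ℝ)*Ln'*s^(3*d-2) := by positivity
    have t3 : 0 ≤ 6*L*(d:ℝ)^2*a*s^(2*d-1)*Q := by positivity
    have t4 : 0 ≤ 3*L*(d:ℝ)*(3*(d:ℝ)-1)*Sr*s^(3*d-2)*P := by positivity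
    rcases hcase with hL | hLn | hLn'
    · have hLpos : 0 < L := lt_of_le_of_ne hL0 (Ne.symm hL)
      have : 0 < 6*L*(d:ℝ)^2*a*s^(2*d-1)*Q := by positivity
      nlinarith [mul_pos hPpos hQpos, mul_nonneg (add_nonneg t1 t2) (le_of_lt (mul_pos hPpos hQpos))]
    · have hLnpos : 0 < Ln := lt_of_le_of_ne hLn0 (Ne.symm hLn)
      have : 0 < (3*(d:ℝ)*(3*(d:ℝ)-1)*Ln)*(P*Q) := by positivity
      nlinarith [mul_nonneg t2 (le_of_lt (mul_pos hPpos hQpos))]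
    · have hLn'pos : 0 < Ln' := lt_of_le_of_ne hLn'0 (Ne.symm hLn')
      have : 0 < (3*(d:ℝ)*Ln'*s^(3*d-2))*(P*Q) := by positivity
      nlinarith [mul_nonneg t1 (le_of_lt (mul_pos hPpos hQpos))]
  have hKP0 : KP ≠ 0 := by
    intro h
    rw [h, zero_mul] at hKPs
    exact absurd hKPs.symm (ne_of_gt hGpos)
  have hK0 : (D - c0^2/(6*w 0) - ∑ i : Fin m, (ci i)^2/cB i) ≠ 0 := by
    intro h
    rw [h, zero_mul, zero_mul] at hKKP
    exact hKP0 (by exact_mod_cast hKKP.symm)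
  -- conclude v = 0, contradiction
  have hvN : v (Fin.last (m+1)) = 0 := by
    rcases mul_eq_zero.mp hKey with h | h
    · exact h
    · exact absurd h hK0
  have hv00 : v 0 = 0 := by rw [hv0e, hvN, mul_zero, neg_zero, zero_div]
  have hvi0 : ∀ i : Fin m, v i.succ.castSucc = 0 := by
    intro i
    rw [hvie i, hvN, mul_zero, neg_zero, zero_div]
  apply hv
  funext k
  refine Fin.lastCases ?_ (fun k' => ?_) k
  · exact hvN
  · refine Fin.cases ?_ (fun i => ?_) k'
    · simpa using hv00
    · exact hvi0 i
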